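/- arXiv:2306.01459 — 3 statements merged into one kernel-verified Lean document; each statement's English description precedes it below -/
import Mathlib

section
/- Let N, M ≥ 3. Suppose z̄, τ̄₁,…,τ̄_{M-1}, τ̄'₁,…,τ̄'_{N-1} are reals with an M-circle inequality 0 ≤ M-2 - z̄ + Σ_{j=1}^{M-1} (-1)^{b_j} τ̄_j (Σ b_j ≡ M mod 2) and an N-circle inequality 0 ≤ N-2 + z̄ + Σ_{k=1}^{N-1} (-1)^{a_k} τ̄'_k (Σ a_k ≡ N+1 mod 2). Then their sum is an (N+M-2)-circle inequality: 0 ≤ (N+M-2) - 2 + Σ_k (-1)^{a_k} τ̄'_k + Σ_j (-1)^{b_j} τ̄_j, with total sign parity Σ a_k + Σ b_j ≡ (N+M-2)+1 (mod 2). -/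
theorem stmt5 (N M : ℕ) (hN : 3 ≤ N) (hM : 3 ≤ M)
    (z : ℝ) (τ τ' : ℕ → ℝ) (a b : ℕ → ℕ)
    (ha : (∑ k ∈ Finset.range (N-1), a k) % 2 = (N+1) % 2)
    (hb : (∑ j ∈ Finset.range (M-1), b j) % 2 = M % 2)
    (hM' : 0 ≤ (M:ℝ) - 2 - z + ∑ j ∈ Finset.range (M-1), (-1:ℝ)^(b j) * τ j)
    (hN' : 0 ≤ (N:ℝ) - 2 + z + ∑ k ∈ Finset.range (N-1), (-1:ℝ)^(a k) * τ' k) :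
    (0 ≤ ((N:ℝ) + M - 2) - 2 +
        (∑ k ∈ Finset.range (N-1), (-1:ℝ)^(a k) * τ' k) +
        (∑ j ∈ Finset.range (M-1), (-1:ℝ)^(b j) * τ j)) ∧
    ((∑ k ∈ Finset.range (N-1), a k) + (∑ j ∈ Finset.range (M-1), b j)) % 2
        = ((N + M - 2) + 1) % 2 := by
  refine ⟨by linarith, ?_⟩
  omega
end

section
/- Let P = {(a₁,…,aₙ,b) ∈ [0,1]^{n+1} : (1-aᵢ)/2 ≤ b ≤ (1+aᵢ)/2 for all i}. The set of extreme points of P is exactly {(1,…,1,0), (1,…,1,1)} ∪ {(a₁,…,aₙ,1/2) : aᵢ ∈ {0,1} for all i, and aⱼ = 0 for at least one j}. In particular P has exactly 2ⁿ + 1 vertices. -/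
open Set

private lemma comb0 {u v y z : ℝ} (hu : 0 < u) (hv : 0 < v)
    (hy : 0 ≤ y) (hz : 0 ≤ z) (h : u * y + v * z = 0) : y = 0 ∧ z = 0 := by
  have h1 : u * y = 0 :=
    le_antisymm (by nlinarith [mul_nonneg hv.le hz]) (mul_nonneg hu.le hy)
  have h2 : v * z = 0 := by linarith
  constructor
  · rcases mul_eq_zero.mp h1 with h | h
    · exact absurd h hu.ne'
    · exact h
  · rcases mul_eq_zero.mp h2 with h | h
    · exact absurd h hv.ne'
    · exact h

private lemma comb1 {u v y z : ℝ} (hu : 0 < u) (hv : 0 < v) (huv : u + v = 1)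
    (hy : y ≤ 1) (hz : z ≤ 1) (h : u * y + v * z = 1) : y = 1 ∧ z = 1 := by
  have := comb0 hu hv (by linarith : (0:ℝ) ≤ 1 - y) (by linarith : (0:ℝ) ≤ 1 - z)
    (by nlinarith)
  constructor <;> linarith [this.1, this.2]

private lemma snd_comb {u v : ℝ} {y z x : (Fin n → ℝ) × ℝ}
    (heq : u • y + v • z = x) : u * y.2 + v * z.2 = x.2 := by
  have := congrArg Prod.snd heq
  simpa using this

private lemma fst_comb {n : ℕ} {u v : ℝ} {y z x : (Fin n → ℝ) × ℝ}
    (heq : u • y + v • z = x) (i : Fin n) : u * y.1 i + v * z.1 i = x.1 i := by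
  have := congrArg (fun p => p.1 i) heq
  simpa using this

private lemma extreme_eq (n : ℕ) :
    Set.extremePoints ℝ
      {x : (Fin n → ℝ) × ℝ | (∀ i, x.1 i ∈ Set.Icc (0:ℝ) 1) ∧ x.2 ∈ Set.Icc (0:ℝ) 1 ∧
        ∀ i, (1 - x.1 i) / 2 ≤ x.2 ∧ x.2 ≤ (1 + x.1 i) / 2} =
      ({(fun _ => 1, 0), (fun _ => 1, 1)} ∪
        {x | (∀ i, x.1 i = 0 ∨ x.1 i = 1) ∧ (∃ j, x.1 j = 0) ∧ x.2 = 1/2}) := by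
  set P : Set ((Fin n → ℝ) × ℝ) :=
    {x | (∀ i, x.1 i ∈ Set.Icc (0:ℝ) 1) ∧ x.2 ∈ Set.Icc (0:ℝ) 1 ∧
      ∀ i, (1 - x.1 i) / 2 ≤ x.2 ∧ x.2 ≤ (1 + x.1 i) / 2} with hP
  have hmem : ∀ x : (Fin n → ℝ) × ℝ, x ∈ P ↔
      (∀ i, 0 ≤ x.1 i ∧ x.1 i ≤ 1) ∧ (0 ≤ x.2 ∧ x.2 ≤ 1) ∧
      ∀ i, (1 - x.1 i) / 2 ≤ x.2 ∧ x.2 ≤ (1 + x.1 i) / 2 := by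
    intro x
    simp [hP, Set.mem_Icc]
  ext x
  rw [mem_extremePoints]
  constructor
  · rintro ⟨hxP, hext⟩
    obtain ⟨ha, hb, hc⟩ := (hmem x).mp hxP
    by_cases hb2 : x.2 = 1/2
    · -- b = 1/2 case
      have hbit : ∀ i, x.1 i = 0 ∨ x.1 i = 1 := by
        intro j
        by_contra hj
        push_neg at hj
        obtain ⟨hj0, hj1⟩ := hj
        have h0 : (0:ℝ) < x.1 j := lt_of_le_of_ne (ha j).1 (Ne.symm hj0)
        have h1 : x.1 j < 1 := lt_of_le_of_ne (ha j).2 hj1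
        set p : (Fin n → ℝ) × ℝ := (Function.update x.1 j 0, 1/2) with hp
        set q : (Fin n → ℝ) × ℝ := (Function.update x.1 j 1, 1/2) with hq
        have hpP : p ∈ P := by
          rw [hmem]
          refine ⟨?_, by norm_num, ?_⟩
          · intro i
            rcases eq_or_ne i j with rfl | hij
            · simp [hp]
            · simp [hp, Function.update_of_ne hij]
              exact ⟨(ha i).1, (ha i).2⟩
          · intro i
            rcases eq_or_ne i j with rfl | hij
            · simp [hp]
            · simp [hp, Function.update_of_ne hij]
              constructor <;> linarith [(ha i).1, (ha i).2]
        have hqP : q ∈ P := by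
          rw [hmem]
          refine ⟨?_, by norm_num, ?_⟩
          · intro i
            rcases eq_or_ne i j with rfl | hij
            · simp [hq]
            · simp [hq, Function.update_of_ne hij]
              exact ⟨(ha i).1, (ha i).2⟩
          · intro i
            rcases eq_or_ne i j with rfl | hij
            · simp [hq]
              norm_num
            · simp [hq, Function.update_of_ne hij]
              constructor <;> linarith [(ha i).1, (ha i).2]
        have hseg : x ∈ openSegment ℝ p q := by
          refine ⟨1 - x.1 j, x.1 j, by linarith, h0, by ring, ?_⟩
          apply Prod.ext
          · funext i
            rcases eq_or_ne i j with rfl | hij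
            · simp [hp, hq]
            · simp [hp, hq, Function.update_of_ne hij]
              ring
          · simp [hp, hq, hb2]
            ring
        have := (hext p hpP q hqP hseg).1
        have := congrArg (fun z => z.1 j) this
        simp [hp] at this
        exact hj0 this.symm
      by_cases hall : ∃ j, x.1 j = 0
      · right
        exact ⟨hbit, hall, hb2⟩
      · -- all coordinates 1, contradiction
        push_neg at hall
        have h1 : ∀ i, x.1 i = 1 := by
          intro i
          rcases hbit i with h | h
          · exact absurd h (hall i)
          · exact h
        exfalso
        set p : (Fin n → ℝ) × ℝ := (fun _ => 1, 0) with hp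
        set q : (Fin n → ℝ) × ℝ := (fun _ => 1, 1) with hq
        have hpP : p ∈ P := by rw [hmem]; norm_num [hp]
        have hqP : q ∈ P := by rw [hmem]; norm_num [hq]
        have hseg : x ∈ openSegment ℝ p q := by
          refine ⟨1/2, 1/2, by norm_num, by norm_num, by norm_num, ?_⟩
          apply Prod.ext
          · funext i
            norm_num [hp, hq, h1 i]
          · norm_num [hp, hq, hb2]
        have := (hext p hpP q hqP hseg).1
        have := congrArg Prod.snd this
        simp [hp, hb2] at this
    · -- b ≠ 1/2
      rcases lt_or_gt_of_ne hb2 with hlt | hgt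
      · -- b < 1/2
        by_cases hb0 : x.2 = 0
        · left; left
          apply Prod.ext
          · funext i
            have h1 := (hc i).1
            rw [hb0] at h1
            have h2 := (ha i).2
            simp only
            linarith
          · exact hb0
        · exfalso
          have hbpos : 0 < x.2 := lt_of_le_of_ne hb.1 (Ne.symm hb0)
          set c : Fin n → ℝ := fun i => (x.1 i - (1 - 2 * x.2)) / (2 * x.2) with hcdef
          set p : (Fin n → ℝ) × ℝ := (fun _ => 1, 0) with hp
          set q : (Fin n → ℝ) × ℝ := (c, 1/2) with hq
          have hv : (0:ℝ) < 2 * x.2 := by linarith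
          have hpP : p ∈ P := by rw [hmem]; norm_num [hp]
          have hqP : q ∈ P := by
            rw [hmem]
            have hci : ∀ i, 0 ≤ c i ∧ c i ≤ 1 := by
              intro i
              constructor
              · apply div_nonneg _ hv.le
                linarith [(hc i).1]
              · rw [div_le_one hv]
                linarith [(ha i).2]
            refine ⟨fun i => by simpa [hq] using hci i, by norm_num [hq], ?_⟩
            intro i
            simp only [hq]
            constructor <;> linarith [(hci i).1, (hci i).2]
          have hseg : x ∈ openSegment ℝ p q := by
            refine ⟨1 - 2 * x.2, 2 * x.2, by linarith, hv, by ring, ?_⟩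
            apply Prod.ext
            · funext i
              simp only [hp, hq, Prod.fst_add, Prod.smul_fst, Pi.add_apply, Pi.smul_apply,
                smul_eq_mul, hcdef]
              field_simp
              ring
            · simp only [hp, hq, Prod.snd_add, Prod.smul_snd, smul_eq_mul]
              ring
          have := (hext p hpP q hqP hseg).1
          have := congrArg Prod.snd this
          simp [hp] at this
          exact hb0 this.symm
      · -- b > 1/2
        by_cases hb1 : x.2 = 1
        · left; right
          apply Prod.ext
          · funext i
            have h2 := (hc i).2
            rw [hb1] at h2
            simp only
            linarith [(ha i).2]
          · exact hb1
        · exfalso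
          have hblt : x.2 < 1 := lt_of_le_of_ne hb.2 hb1
          set c : Fin n → ℝ := fun i => (x.1 i - (2 * x.2 - 1)) / (2 * (1 - x.2)) with hcdef
          set p : (Fin n → ℝ) × ℝ := (fun _ => 1, 1) with hp
          set q : (Fin n → ℝ) × ℝ := (c, 1/2) with hq
          have hv : (0:ℝ) < 2 * (1 - x.2) := by linarith
          have hpP : p ∈ P := by rw [hmem]; norm_num [hp]
          have hqP : q ∈ P := by
            rw [hmem]
            have hci : ∀ i, 0 ≤ c i ∧ c i ≤ 1 := by
              intro i
              constructor
              · apply div_nonneg _ hv.le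
                linarith [(hc i).2]
              · rw [div_le_one hv]
                linarith [(ha i).2]
            refine ⟨fun i => by simpa [hq] using hci i, by norm_num [hq], ?_⟩
            intro i
            simp only [hq]
            constructor <;> linarith [(hci i).1, (hci i).2]
          have hseg : x ∈ openSegment ℝ p q := by
            refine ⟨2 * x.2 - 1, 2 * (1 - x.2), by linarith, hv, by ring, ?_⟩
            apply Prod.ext
            · funext i
              simp only [hp, hq, Prod.fst_add, Prod.smul_fst, Pi.add_apply, Pi.smul_apply,
                smul_eq_mul, hcdef]
              field_simp
              ring
            · simp only [hp, hq, Prod.snd_add, Prod.smul_snd, smul_eq_mul]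
              ring
          have := (hext p hpP q hqP hseg).1
          have := congrArg Prod.snd this
          simp [hp] at this
          linarith [this]
  · -- backward direction
    intro hx
    rcases hx with (rfl | rfl) | ⟨hbit, ⟨j, hj⟩, hb2⟩
    · -- (1, 0)
      refine ⟨(hmem _).mpr (by norm_num), ?_⟩
      rintro y hyP z hzP ⟨u, v, hu, hv, huv, heq⟩
      obtain ⟨hya, hyb, hyc⟩ := (hmem y).mp hyP
      obtain ⟨hza, hzb, hzc⟩ := (hmem z).mp hzP
      have hsnd : u * y.2 + v * z.2 = 0 := snd_comb heq
      obtain ⟨hy0, hz0⟩ := comb0 hu hv hyb.1 hzb.1 hsnd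
      have hy1 : ∀ i, y.1 i = 1 := fun i => by
        have := (hyc i).1; rw [hy0] at this; linarith [(hya i).2]
      have hz1 : ∀ i, z.1 i = 1 := fun i => by
        have := (hzc i).1; rw [hz0] at this; linarith [(hza i).2]
      constructor <;> [exact Prod.ext (funext hy1) hy0; exact Prod.ext (funext hz1) hz0]
    · -- (1, 1)
      refine ⟨(hmem _).mpr (by norm_num), ?_⟩
      rintro y hyP z hzP ⟨u, v, hu, hv, huv, heq⟩
      obtain ⟨hya, hyb, hyc⟩ := (hmem y).mp hyP
      obtain ⟨hza, hzb, hzc⟩ := (hmem z).mp hzP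
      have hsnd : u * y.2 + v * z.2 = 1 := snd_comb heq
      obtain ⟨hy0, hz0⟩ := comb1 hu hv huv hyb.2 hzb.2 hsnd
      have hy1 : ∀ i, y.1 i = 1 := fun i => by
        have := (hyc i).2; rw [hy0] at this; linarith [(hya i).2]
      have hz1 : ∀ i, z.1 i = 1 := fun i => by
        have := (hzc i).2; rw [hz0] at this; linarith [(hza i).2]
      constructor <;> [exact Prod.ext (funext hy1) hy0; exact Prod.ext (funext hz1) hz0]
    · -- cube vertex with x.2 = 1/2, some coordinate 0
      refine ⟨(hmem _).mpr ⟨fun i => ?_, by rw [hb2]; norm_num, fun i => ?_⟩, ?_⟩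
      · rcases hbit i with h | h <;> rw [h] <;> norm_num
      · rcases hbit i with h | h <;> rw [h, hb2] <;> norm_num
      rintro y hyP z hzP ⟨u, v, hu, hv, huv, heq⟩
      obtain ⟨hya, hyb, hyc⟩ := (hmem y).mp hyP
      obtain ⟨hza, hzb, hzc⟩ := (hmem z).mp hzP
      have hcoord : ∀ i, y.1 i = x.1 i ∧ z.1 i = x.1 i := by
        intro i
        have hfi := fst_comb heq i
        rcases hbit i with h | h
        · rw [h] at hfi ⊢
          exact comb0 hu hv (hya i).1 (hza i).1 hfi
        · rw [h] at hfi ⊢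
          exact comb1 hu hv huv (hya i).2 (hza i).2 hfi
      have hyj : y.1 j = 0 := (hcoord j).1.trans hj
      have hzj : z.1 j = 0 := (hcoord j).2.trans hj
      have hyb2 : y.2 = 1/2 := by
        have h := hyc j; rw [hyj] at h; linarith [h.1, h.2]
      have hzb2 : z.2 = 1/2 := by
        have h := hzc j; rw [hzj] at h; linarith [h.1, h.2]
      constructor
      · exact Prod.ext (funext fun i => (hcoord i).1) (hyb2.trans hb2.symm)
      · exact Prod.ext (funext fun i => (hcoord i).2) (hzb2.trans hb2.symm)

private lemma card_lemma (n : ℕ) :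
    (({((fun _ => 1 : Fin n → ℝ), (0:ℝ)), (fun _ => 1, 1)} ∪
      {x : (Fin n → ℝ) × ℝ | (∀ i, x.1 i = 0 ∨ x.1 i = 1) ∧ (∃ j, x.1 j = 0) ∧ x.2 = 1/2})).ncard
      = 2 ^ n + 1 := by
  set g : (Fin n → Bool) → (Fin n → ℝ) := fun b => fun i => if b i then 1 else 0 with hg
  have hginj : Function.Injective g := by
    intro b b' h
    funext i
    have := congrFun h i
    by_cases hb : b i <;> by_cases hb' : b' i <;> simp [hg, hb, hb'] at this ⊢ <;> norm_num at this
  set V : Set (Fin n → ℝ) := {f | ∀ i, f i = 0 ∨ f i = 1} with hVdef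
  have hV : V = Set.range g := by
    ext f
    constructor
    · intro hf
      refine ⟨fun i => if f i = 1 then true else false, ?_⟩
      funext i
      rcases hf i with h0 | h1
      · simp [hg, h0]
      · simp [hg, h1]
    · rintro ⟨b, rfl⟩ i
      by_cases hb : b i <;> simp [hg, hb]
  have hVfin : V.Finite := by rw [hV]; exact Set.finite_range g
  have hVcard : V.ncard = 2 ^ n := by
    rw [hV, ← Set.image_univ, Set.ncard_image_of_injective _ hginj, Set.ncard_univ]
    simp
  have hone : (fun _ => (1:ℝ)) ∈ V := fun i => Or.inr rfl
  set U : Set (Fin n → ℝ) := V \ {fun _ => 1} with hUdef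
  have hUfin : U.Finite := hVfin.subset Set.diff_subset
  have hUcard : U.ncard = 2 ^ n - 1 := by
    rw [hUdef, Set.ncard_diff_singleton_of_mem hone, hVcard]
  set T : Set ((Fin n → ℝ) × ℝ) := (fun f => (f, (1:ℝ)/2)) '' U with hTdef
  have hTinj : Function.Injective (fun f : Fin n → ℝ => (f, (1:ℝ)/2)) := by
    intro f f' h
    exact congrArg Prod.fst h
  have hTcard : T.ncard = 2 ^ n - 1 := by
    rw [hTdef, Set.ncard_image_of_injective _ hTinj, hUcard]
  have hTfin : T.Finite := hUfin.image _
  have hTeq : {x : (Fin n → ℝ) × ℝ | (∀ i, x.1 i = 0 ∨ x.1 i = 1) ∧ (∃ j, x.1 j = 0) ∧ x.2 = 1/2}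
      = T := by
    ext ⟨f, b⟩
    constructor
    · rintro ⟨hbit, ⟨j, hj⟩, hb⟩
      have hj' : f j = 0 := hj
      have hb' : b = 1/2 := hb
      refine ⟨f, ⟨hbit, ?_⟩, ?_⟩
      · intro h
        have h2 : f = fun _ => 1 := h
        have := congrFun h2 j
        rw [hj'] at this
        norm_num at this
      · exact Prod.ext rfl hb'.symm
    · rintro ⟨f', ⟨hfV, hne⟩, heq⟩
      have h1 : f' = f := congrArg Prod.fst heq
      have h2 : (1:ℝ)/2 = b := congrArg Prod.snd heq
      subst h1
      subst h2
      refine ⟨hfV, ?_, rfl⟩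
      by_contra hno
      push_neg at hno
      apply hne
      have : f' = fun _ => 1 := by
        funext i
        rcases hfV i with h | h
        · exact absurd h (hno i)
        · exact h
      exact this
  have hp1T : ((fun _ => 1 : Fin n → ℝ), (0:ℝ)) ∉ T := by
    rintro ⟨f, hf, heq⟩
    have := congrArg Prod.snd heq
    norm_num at this
  have hp2T : ((fun _ => 1 : Fin n → ℝ), (1:ℝ)) ∉ T := by
    rintro ⟨f, hf, heq⟩
    have := congrArg Prod.snd heq
    norm_num at this
  have hne12 : ((fun _ => 1 : Fin n → ℝ), (0:ℝ)) ≠ ((fun _ => 1 : Fin n → ℝ), (1:ℝ)) := by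
    intro h
    have := congrArg Prod.snd h
    norm_num at this
  rw [hTeq, Set.insert_union, Set.singleton_union,
    Set.ncard_insert_of_notMem (by simp [hne12, hp1T]) (hTfin.insert _),
    Set.ncard_insert_of_notMem hp2T hTfin, hTcard]
  have h2n : 1 ≤ 2 ^ n := Nat.one_le_two_pow
  omega

theorem stmt11 (n : ℕ) :
    letI P : Set ((Fin n → ℝ) × ℝ) :=
      {x | (∀ i, x.1 i ∈ Set.Icc (0:ℝ) 1) ∧ x.2 ∈ Set.Icc (0:ℝ) 1 ∧
        ∀ i, (1 - x.1 i) / 2 ≤ x.2 ∧ x.2 ≤ (1 + x.1 i) / 2}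
    Set.extremePoints ℝ P =
      ({(fun _ => 1, 0), (fun _ => 1, 1)} ∪
        {x | (∀ i, x.1 i = 0 ∨ x.1 i = 1) ∧ (∃ j, x.1 j = 0) ∧ x.2 = 1/2}) ∧
    (Set.extremePoints ℝ P).ncard = 2 ^ n + 1 := by
  refine ⟨extreme_eq n, ?_⟩
  rw [extreme_eq n]
  exact card_lemma n
end

section
/- Let E be the N×N matrix over ℝ with E_{i,i} = 1, E_{i,i+1} = (-1)^{c_i+1} for 1 ≤ i ≤ N-1, E_{N,1} = (-1)^{c_N+1}, E_{N,N} = 1, and all other entries 0, where c₁,…,c_N ∈ ℤ₂. Then rank(E) = N if Σᵢ cᵢ ≡ 1 (mod 2), and rank(E) = N-1 if Σᵢ cᵢ ≡ 0 (mod 2). -/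
theorem stmt12 (N : ℕ) (hN : 2 ≤ N) (c : Fin N → ℕ)
    (E : Matrix (Fin N) (Fin N) ℝ)
    (hE : ∀ i j : Fin N,
      E i j = if (j : ℕ) = (i : ℕ) then 1
        else if (j : ℕ) = ((i : ℕ) + 1) % N then (-1:ℝ)^(c i + 1) else 0) :
    ((∑ i, c i) % 2 = 1 → E.rank = N) ∧
    ((∑ i, c i) % 2 = 0 → E.rank = N - 1) := by
  have hN0 : 0 < N := by omega
  -- notation
  set s : Fin N → ℝ := fun i => (-1:ℝ)^(c i + 1) with hsdef
  have hs1 : ∀ i, s i = 1 ∨ s i = -1 := by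
    intro i
    rcases Nat.even_or_odd (c i + 1) with h | h
    · exact Or.inl h.neg_one_pow
    · exact Or.inr h.neg_one_pow
  have hss : ∀ i, s i * s i = 1 := by
    intro i; rcases hs1 i with h | h <;> rw [h] <;> norm_num
  have hsne : ∀ i, s i ≠ 0 := by
    intro i; rcases hs1 i with h | h <;> rw [h] <;> norm_num
  -- successor on Fin N
  let succ : Fin N → Fin N := fun i => ⟨(i.val + 1) % N, Nat.mod_lt _ hN0⟩
  -- mulVec formula
  have hne : ∀ i : Fin N, succ i ≠ i := by
    intro i h
    have : (i.val + 1) % N = i.val := congrArg Fin.val h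
    rcases Nat.lt_or_ge (i.val + 1) N with h' | h'
    · rw [Nat.mod_eq_of_lt h'] at this; omega
    · have hi : i.val = N - 1 := by have := i.isLt; omega
      have : (i.val + 1) % N = 0 := by
        rw [hi]; rw [Nat.sub_add_cancel (by omega)]; simp
      omega
  have hEeq : ∀ i j : Fin N, E i j =
      (if j = i then (1:ℝ) else 0) + (if j = succ i then s i else 0) := by
    intro i j
    rw [hE i j]
    by_cases h1 : (j : ℕ) = (i : ℕ)
    · have hj : j = i := Fin.ext h1
      have hj2 : j ≠ succ i := by rw [hj]; exact (hne i).symm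
      rw [if_pos h1, if_pos hj, if_neg hj2]; ring
    · have hj : j ≠ i := fun h => h1 (congrArg Fin.val h)
      by_cases h2 : (j : ℕ) = ((i : ℕ) + 1) % N
      · have hj2 : j = succ i := Fin.ext h2
        rw [if_neg h1, if_pos h2, if_neg hj, if_pos hj2]; ring
      · have hj2 : j ≠ succ i := fun h => h2 (congrArg Fin.val h)
        rw [if_neg h1, if_neg h2, if_neg hj, if_neg hj2]; ring
  have hmv : ∀ (x : Fin N → ℝ) (i : Fin N),
      E.mulVec x i = x i + s i * x (succ i) := by
    intro x i
    simp only [Matrix.mulVec, dotProduct, hEeq, add_mul, ite_mul, one_mul, zero_mul,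
      Finset.sum_add_distrib, Finset.sum_ite_eq', Finset.mem_univ, if_true]
  -- kernel membership
  have hker : ∀ x : Fin N → ℝ, E.mulVec x = 0 ↔ ∀ i, x i + s i * x (succ i) = 0 := by
    intro x
    constructor
    · intro h i; have := congrFun h i; rw [hmv] at this; exact this
    · intro h; funext i; rw [Pi.zero_apply, hmv]; exact h i
  -- auxiliary sign sequence
  let w : ℕ → ℝ := fun k => if h : k < N then -(s ⟨k, h⟩) else 1
  let v : Fin N → ℝ := fun i => ∏ k ∈ Finset.range i.val, w k
  have hv0 : v ⟨0, hN0⟩ = 1 := by simp [v]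
  have hvsucc : ∀ (k : ℕ) (h : k + 1 < N),
      v ⟨k + 1, h⟩ = -(s ⟨k, by omega⟩) * v ⟨k, by omega⟩ := by
    intro k h
    show (∏ j ∈ Finset.range (k+1), w j) = _
    rw [Finset.prod_range_succ, mul_comm]
    congr 1
    simp only [w, dif_pos (show k < N by omega)]
  -- full product equals (-1)^(∑ c)
  have hprod : (∏ k ∈ Finset.range N, w k) = (-1:ℝ)^(∑ i, c i) := by
    rw [← Fin.prod_univ_eq_prod_range]
    have : ∀ i : Fin N, w i.val = (-1:ℝ)^(c i) := by
      intro i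
      simp only [w, dif_pos i.isLt, hsdef, Fin.eta]
      rw [pow_succ]
      ring
    rw [Finset.prod_congr rfl (fun i _ => this i)]
    rw [Finset.prod_pow_eq_pow_sum]
  -- set P
  set P : ℝ := (-1:ℝ)^(∑ i, c i) with hP
  -- the last index
  have hNm1 : N - 1 < N := by omega
  let last : Fin N := ⟨N - 1, hNm1⟩
  have hsucclast : succ last = ⟨0, hN0⟩ := by
    apply Fin.ext
    show (N - 1 + 1) % N = 0
    rw [Nat.sub_add_cancel (by omega)]; simp
  have hsuccmid : ∀ (k : ℕ) (h : k + 1 < N), succ ⟨k, by omega⟩ = ⟨k + 1, h⟩ := by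
    intro k h
    apply Fin.ext
    show (k + 1) % N = k + 1
    exact Nat.mod_eq_of_lt h
  -- v last * (-(s last)) = P
  have hvlast : v last * (-(s last)) = P := by
    have : (∏ k ∈ Finset.range N, w k)
        = (∏ k ∈ Finset.range (N-1), w k) * w (N-1) := by
      rw [← Finset.prod_range_succ, Nat.sub_add_cancel (by omega)]
    rw [← hprod, this]
    congr 1
    simp only [w, dif_pos hNm1]; rfl
  -- any kernel element is x 0 • v
  have hker_scal : ∀ x : Fin N → ℝ, E.mulVec x = 0 →
      ∀ k : ℕ, ∀ h : k < N, x ⟨k, h⟩ = x ⟨0, hN0⟩ * v ⟨k, h⟩ := by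
    intro x hx
    have hrel := (hker x).mp hx
    intro k
    induction k with
    | zero => intro h; rw [hv0]; ring
    | succ n ih =>
      intro h
      have hn : n < N := by omega
      have h1 := hrel ⟨n, hn⟩
      rw [hsuccmid n h] at h1
      -- x n + s n * x (n+1) = 0  →  x (n+1) = -(s n) * x n
      have h2 : x ⟨n+1, h⟩ = -(s ⟨n, hn⟩) * x ⟨n, hn⟩ := by
        rcases hs1 ⟨n, hn⟩ with hsv | hsv <;> rw [hsv] <;> rw [hsv] at h1 <;> linarith
      rw [h2, ih hn, hvsucc n h]; ring
  -- wrap-around value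
  have hwrap : ∀ x : Fin N → ℝ, E.mulVec x = 0 →
      x ⟨0, hN0⟩ * (v last + s last) = 0 := by
    intro x hx
    have hrel := (hker x).mp hx
    have h1 := hrel last
    rw [hsucclast] at h1
    have h2 := hker_scal x hx (N-1) hNm1
    have : x ⟨0, hN0⟩ * v last + s last * x ⟨0, hN0⟩ = 0 := by
      rw [← h2]; exact h1
    nlinarith [this]
  constructor
  · -- odd case: kernel is trivial
    intro hodd
    have hPneg : P = -1 := by
      rw [hP, ← Nat.div_add_mod (∑ i, c i) 2, hodd, pow_add, pow_mul]
      norm_num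
    have hkertriv : ∀ x : Fin N → ℝ, E.mulVec x = 0 → x = 0 := by
      intro x hx
      have h0 : x ⟨0, hN0⟩ = 0 := by
        have hw := hwrap x hx
        have hvl : v last + s last = 2 * s last := by
          have h1 : v last * (-(s last)) = -1 := by rw [hvlast, hPneg]
          have h2 : v last = s last := by
            rcases hs1 last with hsv | hsv <;> rw [hsv] <;> rw [hsv] at h1 <;> linarith
          rw [h2]; ring
        rw [hvl] at hw
        have := hsne last
        rcases mul_eq_zero.mp hw with h | h
        · exact h
        · exfalso; apply this; linarith
      funext i
      have := hker_scal x hx i.val i.isLt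
      rw [Fin.eta] at this
      rw [this, h0]; simp
    -- rank = N
    have : LinearMap.ker E.mulVecLin = ⊥ := by
      rw [LinearMap.ker_eq_bot']
      intro x hx
      exact hkertriv x hx
    have hrn := LinearMap.finrank_range_add_finrank_ker E.mulVecLin
    rw [this, finrank_bot, Module.finrank_fin_fun] at hrn
    simpa [Matrix.rank] using hrn
  · -- even case: kernel is span of v
    intro heven
    have hPpos : P = 1 := by
      rw [hP, ← Nat.div_add_mod (∑ i, c i) 2, heven, pow_add, pow_mul]
      norm_num
    have hvlast' : v last = -(s last) := by
      have h1 : v last * (-(s last)) = 1 := by rw [hvlast, hPpos]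
      rcases hs1 last with hsv | hsv <;> rw [hsv] <;> rw [hsv] at h1 <;> linarith
    -- v is in the kernel
    have hvker : E.mulVec v = 0 := by
      rw [hker]
      intro i
      rcases Nat.lt_or_ge (i.val + 1) N with h | h
      · have hi : i = ⟨i.val, i.isLt⟩ := (Fin.eta i i.isLt).symm
        rw [hi, hsuccmid i.val h, hvsucc i.val h]
        rcases hs1 ⟨i.val, i.isLt⟩ with hsv | hsv <;> rw [hsv] <;> ring
      · have hi : i = last := Fin.ext (by have := i.isLt; simp only [last]; omega)
        rw [hi, hsucclast, hv0, hvlast']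
        ring
    have hvne : v ≠ 0 := by
      intro h
      have := congrFun h ⟨0, hN0⟩
      rw [hv0] at this
      simp at this
    -- ker = span {v}
    have hkereq : LinearMap.ker E.mulVecLin = Submodule.span ℝ {v} := by
      apply le_antisymm
      · intro x hx
        rw [LinearMap.mem_ker, Matrix.mulVecLin_apply] at hx
        have : x = x ⟨0, hN0⟩ • v := by
          funext i
          have := hker_scal x hx i.val i.isLt
          rw [Fin.eta] at this
          rw [this]; simp [mul_comm]
        rw [this]
        exact Submodule.smul_mem _ _ (Submodule.mem_span_singleton_self v)
      · rw [Submodule.span_le, Set.singleton_subset_iff]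
        rw [SetLike.mem_coe, LinearMap.mem_ker, Matrix.mulVecLin_apply]
        exact hvker
    have hrn := LinearMap.finrank_range_add_finrank_ker E.mulVecLin
    rw [hkereq, finrank_span_singleton hvne, Module.finrank_fin_fun] at hrn
    have : E.rank + 1 = N := by simpa [Matrix.rank] using hrn
    omega
end
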